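/- Let A and B be bounded linear operators on a complex Hilbert space H, and let T be the operator on H ⊕ H given by the 2×2 operator matrix with zero diagonal entries, (1,2)-entry A, and (2,1)-entry B*. Then 2 w(T) = sup over θ ∈ ℝ of ‖e^{iθ} A + e^{−iθ} B‖, where w denotes the numerical radius. -/

import Mathlib

open ComplexConjugate

/-- Alignment lemma: rotating two complex numbers toward a common argument. -/
lemma stmt8_align (a b : ℂ) : ∃ φ : ℝ, ‖(Complex.exp (φ * Complex.I) * a
    + Complex.exp (-(φ * Complex.I)) * b)‖ = ‖a‖ + ‖b‖ := by
  refine ⟨(b.arg - a.arg) / 2, ?_⟩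
  have ha := Complex.norm_mul_exp_arg_mul_I a
  have hb := Complex.norm_mul_exp_arg_mul_I b
  set φ : ℝ := (b.arg - a.arg) / 2 with hφ
  have h1 : Complex.exp (φ * Complex.I) * a
      = ‖a‖ * Complex.exp (((a.arg + b.arg)/2 : ℝ) * Complex.I) := by
    conv_lhs => rw [← ha]
    rw [mul_left_comm, ← Complex.exp_add, hφ]
    push_cast
    ring_nf
  have h2 : Complex.exp (-(φ * Complex.I)) * b
      = ‖b‖ * Complex.exp (((a.arg + b.arg)/2 : ℝ) * Complex.I) := by
    conv_lhs => rw [← hb]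
    rw [mul_left_comm, ← Complex.exp_add, hφ]
    push_cast
    ring_nf
  rw [h1, h2, ← add_mul, norm_mul, Complex.norm_exp_ofReal_mul_I, mul_one]
  rw [← Complex.ofReal_add, Complex.norm_real, Real.norm_eq_abs, abs_of_nonneg (by positivity)]

/-- The numerical radius of a bounded linear operator. -/
noncomputable def numRadius {E : Type*} [NormedAddCommGroup E] [InnerProductSpace ℂ E]
    (T : E →L[ℂ] E) : ℝ :=
  ⨆ x : {x : E // ‖x‖ = 1}, ‖(inner ℂ (T x.val) x.val : ℂ)‖

/-- The 2×2 operator matrix `[[0, C],[D, 0]]` acting on `H ⊕ H` (as `WithLp 2 (H × H)`)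
by `(x, y) ↦ (C y, D x)`. -/
noncomputable def offDiagOp {H : Type*} [NormedAddCommGroup H] [InnerProductSpace ℂ H]
    (C D : H →L[ℂ] H) : WithLp 2 (H × H) →L[ℂ] WithLp 2 (H × H) :=
  ((WithLp.prodContinuousLinearEquiv 2 ℂ H H).symm : (H × H) →L[ℂ] WithLp 2 (H × H)) ∘L
    ((C ∘L ContinuousLinearMap.snd ℂ H H).prod (D ∘L ContinuousLinearMap.fst ℂ H H)) ∘L
    ((WithLp.prodContinuousLinearEquiv 2 ℂ H H) : WithLp 2 (H × H) →L[ℂ] (H × H))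

theorem stmt_8 {H : Type*} [NormedAddCommGroup H] [InnerProductSpace ℂ H] [CompleteSpace H]
    (A B : H →L[ℂ] H) (T : WithLp 2 (H × H) →L[ℂ] WithLp 2 (H × H))
    (hT : T = offDiagOp A (ContinuousLinearMap.adjoint B)) :
    2 * numRadius T =
      ⨆ θ : ℝ, ‖Complex.exp (θ * Complex.I) • A + Complex.exp (-(θ * Complex.I)) • B‖ := by
  set F : ℝ → (H →L[ℂ] H) :=
    fun θ => Complex.exp (θ * Complex.I) • A + Complex.exp (-(θ * Complex.I)) • B with hF
  -- inner product formula for T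
  have hTz : ∀ z : WithLp 2 (H × H), (inner ℂ (T z) z : ℂ)
      = inner ℂ (A z.snd) z.fst + conj (inner ℂ (B z.snd) z.fst : ℂ) := by
    intro z
    rw [hT]
    show (inner ℂ (A z.snd) z.fst : ℂ)
        + inner ℂ ((ContinuousLinearMap.adjoint B) z.fst) z.snd = _
    rw [ContinuousLinearMap.adjoint_inner_left, inner_conj_symm]
  -- inner product formula for F θ
  have hFinner : ∀ (θ : ℝ) (x y : H), (inner ℂ ((F θ) y) x : ℂ)
      = Complex.exp (-(θ * Complex.I)) * inner ℂ (A y) x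
        + Complex.exp (θ * Complex.I) * inner ℂ (B y) x := by
    intro θ x y
    have hc : conj (Complex.exp ((θ:ℂ) * Complex.I)) = Complex.exp (-(θ * Complex.I)) := by
      rw [← Complex.exp_conj]; simp
    have hc' : conj (Complex.exp (-((θ:ℂ) * Complex.I))) = Complex.exp (θ * Complex.I) := by
      rw [← Complex.exp_conj]; simp
    simp [hF, ContinuousLinearMap.add_apply, ContinuousLinearMap.smul_apply,
      inner_add_left, inner_smul_left, hc, hc']
    ring
  -- boundedness facts
  have hbddT : BddAbove (Set.range fun z : {z : WithLp 2 (H × H) // ‖z‖ = 1} =>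
      ‖(inner ℂ (T z.val) z.val : ℂ)‖) := by
    refine ⟨‖T‖, ?_⟩
    rintro _ ⟨z, rfl⟩
    calc ‖(inner ℂ (T z.val) z.val : ℂ)‖ ≤ ‖T z.val‖ * ‖z.val‖ := norm_inner_le_norm _ _
      _ ≤ (‖T‖ * ‖z.val‖) * ‖z.val‖ := by gcongr; exact T.le_opNorm _
      _ = ‖T‖ := by rw [z.2]; ring
  have hbddF : BddAbove (Set.range fun θ : ℝ => ‖F θ‖) := by
    refine ⟨‖A‖ + ‖B‖, ?_⟩
    rintro _ ⟨θ, rfl⟩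
    calc ‖F θ‖ ≤ ‖Complex.exp (θ * Complex.I) • A‖ + ‖Complex.exp (-(θ * Complex.I)) • B‖ :=
          norm_add_le _ _
      _ ≤ ‖A‖ + ‖B‖ := by
          rw [norm_smul, norm_smul]
          have h1 : ‖Complex.exp ((θ:ℂ) * Complex.I)‖ = 1 := by simp
          have h2 : ‖Complex.exp (-((θ:ℂ) * Complex.I))‖ = 1 := by
            rw [← neg_mul]
            simpa using Complex.norm_exp_ofReal_mul_I (-θ)
          rw [h1, h2, one_mul, one_mul]
  -- nonnegativity of numRadius
  have hwnn : 0 ≤ numRadius T := by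
    by_cases hne : Nonempty {z : WithLp 2 (H × H) // ‖z‖ = 1}
    · obtain ⟨z⟩ := hne
      exact le_trans (norm_nonneg _) (le_ciSup hbddT z)
    · haveI := not_nonempty_iff.mp hne
      rw [numRadius, iSup, Set.range_eq_empty, Real.sSup_empty]
  -- construction of test vectors
  have zconstr : ∀ (φ : ℝ) (x y : H), ‖x‖ = 1 → ‖y‖ = 1 →
      ∃ z : WithLp 2 (H × H), ‖z‖ = 1 ∧ 2 * (inner ℂ (T z) z : ℂ)
        = Complex.exp (φ * Complex.I) * inner ℂ (A y) x
          + Complex.exp (-(φ * Complex.I)) * conj (inner ℂ (B y) x : ℂ) := by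
    intro φ x y hx hy
    have h2 : Real.sqrt 2 * Real.sqrt 2 = 2 := Real.mul_self_sqrt (by norm_num)
    have h2pos : (0:ℝ) < Real.sqrt 2 := Real.sqrt_pos.mpr (by norm_num)
    refine ⟨(WithLp.equiv 2 (H × H)).symm
      ((((Real.sqrt 2)⁻¹ : ℝ) * Complex.exp (φ * Complex.I)) • x,
        (((Real.sqrt 2)⁻¹ : ℝ) : ℂ) • y), ?_, ?_⟩
    · have hsq : ‖(WithLp.equiv 2 (H × H)).symm
          ((((Real.sqrt 2)⁻¹ : ℝ) * Complex.exp (φ * Complex.I)) • x,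
            (((Real.sqrt 2)⁻¹ : ℝ) : ℂ) • y)‖ ^ 2 = 1 := by
        rw [WithLp.prod_norm_sq_eq_of_L2]
        show ‖(_ : ℂ) • x‖^2 + ‖(_ : ℂ) • y‖^2 = 1
        rw [norm_smul, norm_smul, hx, hy, norm_mul]
        simp only [Complex.norm_real, Real.norm_eq_abs,
          Complex.norm_exp_ofReal_mul_I,
          abs_of_nonneg (inv_nonneg.mpr h2pos.le), mul_one]
        field_simp
        rw [sq, h2]; norm_num
      nlinarith [norm_nonneg ((WithLp.equiv 2 (H × H)).symm
          ((((Real.sqrt 2)⁻¹ : ℝ) * Complex.exp (φ * Complex.I)) • x,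
            (((Real.sqrt 2)⁻¹ : ℝ) : ℂ) • y))]
    · rw [hTz]
      show 2 * ((inner ℂ (A ((((Real.sqrt 2)⁻¹ : ℝ) : ℂ) • y))
          ((((Real.sqrt 2)⁻¹ : ℝ) * Complex.exp (φ * Complex.I)) • x) : ℂ)
          + conj (inner ℂ (B ((((Real.sqrt 2)⁻¹ : ℝ) : ℂ) • y))
          ((((Real.sqrt 2)⁻¹ : ℝ) * Complex.exp (φ * Complex.I)) • x) : ℂ)) = _
      simp only [map_smul, inner_smul_left, inner_smul_right, map_mul, Complex.conj_conj,
        Complex.conj_ofReal]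
      have hc : conj (Complex.exp ((φ:ℂ) * Complex.I)) = Complex.exp (-(φ * Complex.I)) := by
        rw [← Complex.exp_conj]; simp
      rw [hc]
      have hhalf : (((Real.sqrt 2)⁻¹ : ℝ) : ℂ) * (((Real.sqrt 2)⁻¹ : ℝ) : ℂ) = 2⁻¹ := by
        norm_cast
        rw [← mul_inv, h2]
        norm_num
      linear_combination (2 * (inner ℂ (A y) x : ℂ) * Complex.exp (φ * Complex.I)
        + 2 * conj (inner ℂ (B y) x : ℂ) * Complex.exp (-(φ * Complex.I))) * hhalf
  -- key claim
  have claim1 : ∀ x y : H, ‖x‖ = 1 → ‖y‖ = 1 →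
      ‖(inner ℂ (A y) x : ℂ)‖ + ‖(inner ℂ (B y) x : ℂ)‖
        ≤ 2 * numRadius T := by
    intro x y hx hy
    obtain ⟨φ, hφ⟩ := stmt8_align (inner ℂ (A y) x : ℂ) (conj (inner ℂ (B y) x : ℂ))
    rw [Complex.norm_conj] at hφ
    obtain ⟨z, hz1, hz2⟩ := zconstr φ x y hx hy
    calc ‖(inner ℂ (A y) x : ℂ)‖ + ‖(inner ℂ (B y) x : ℂ)‖
        = ‖(2 * (inner ℂ (T z) z : ℂ))‖ := by rw [hz2, hφ]
      _ = 2 * ‖(inner ℂ (T z) z : ℂ)‖ := by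
          rw [norm_mul]
          norm_num
      _ ≤ 2 * numRadius T := by
          have h : ‖(inner ℂ (T z) z : ℂ)‖ ≤ numRadius T := le_ciSup hbddT ⟨z, hz1⟩
          linarith
  -- direction 1 : each ‖F θ‖ ≤ 2 * numRadius T
  have dir1 : ∀ θ : ℝ, ‖F θ‖ ≤ 2 * numRadius T := by
    intro θ
    refine ContinuousLinearMap.opNorm_le_bound _ (by linarith) (fun y => ?_)
    rcases eq_or_ne y 0 with rfl | hy0
    · simp
    · set y' : H := ((‖y‖⁻¹ : ℝ) : ℂ) • y with hy'
      have hyne : ‖y‖ ≠ 0 := norm_ne_zero_iff.mpr hy0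
      have hy'1 : ‖y'‖ = 1 := by
        rw [hy', norm_smul, Complex.norm_real, Real.norm_eq_abs,
          abs_of_nonneg (inv_nonneg.mpr (norm_nonneg y)), inv_mul_cancel₀ hyne]
      have key : ‖(F θ) y'‖ ≤ 2 * numRadius T := by
        rcases eq_or_ne ((F θ) y') 0 with h0 | h0
        · rw [h0, norm_zero]; linarith
        · set u : H := (F θ) y' with hu
          set x : H := ((‖u‖⁻¹ : ℝ) : ℂ) • u with hx
          have hune : ‖u‖ ≠ 0 := norm_ne_zero_iff.mpr h0
          have hx1 : ‖x‖ = 1 := by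
            rw [hx, norm_smul, Complex.norm_real, Real.norm_eq_abs,
              abs_of_nonneg (inv_nonneg.mpr (norm_nonneg u)), inv_mul_cancel₀ hune]
          have hinner : (inner ℂ u x : ℂ) = (‖u‖ : ℂ) := by
            rw [hx, inner_smul_right, inner_self_eq_norm_sq_to_K]
            have : (‖u‖ : ℂ) ≠ 0 := by
              simpa using norm_ne_zero_iff.mpr h0
            field_simp
            simp [sq, this]
          have habs : ‖u‖ = ‖(inner ℂ u x : ℂ)‖ := by
            rw [hinner, Complex.norm_real, Real.norm_eq_abs, abs_of_nonneg (norm_nonneg u)]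
          show ‖u‖ ≤ 2 * numRadius T
          rw [habs, hu, hFinner]
          calc ‖(Complex.exp (-(θ * Complex.I)) * (inner ℂ (A y') x : ℂ)
              + Complex.exp (θ * Complex.I) * (inner ℂ (B y') x : ℂ))‖
              ≤ ‖(Complex.exp (-(θ * Complex.I)) * (inner ℂ (A y') x : ℂ))‖
                + ‖(Complex.exp (θ * Complex.I) * (inner ℂ (B y') x : ℂ))‖ :=
                norm_add_le _ _
            _ = ‖(inner ℂ (A y') x : ℂ)‖ + ‖(inner ℂ (B y') x : ℂ)‖ := by
                rw [norm_mul, norm_mul]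
                have e1 : ‖(Complex.exp (-((θ:ℂ) * Complex.I)))‖ = 1 := by
                  rw [← neg_mul]
                  simpa using Complex.norm_exp_ofReal_mul_I (-θ)
                have e2 : ‖(Complex.exp ((θ:ℂ) * Complex.I))‖ = 1 :=
                  Complex.norm_exp_ofReal_mul_I θ
                rw [e1, e2, one_mul, one_mul]
            _ ≤ 2 * numRadius T := claim1 x y' hx1 hy'1
      have hyeq : (F θ) y = (‖y‖ : ℂ) • (F θ) y' := by
        rw [hy', map_smul, smul_smul]
        have : (‖y‖ : ℂ) * ((‖y‖⁻¹ : ℝ) : ℂ) = 1 := by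
          norm_cast
          field_simp
        rw [this, one_smul]
      rw [hyeq, norm_smul]
      simp only [Complex.norm_real, Real.norm_eq_abs, abs_of_nonneg (norm_nonneg y)]
      calc ‖y‖ * ‖(F θ) y'‖ ≤ ‖y‖ * (2 * numRadius T) := by
            gcongr
        _ = 2 * numRadius T * ‖y‖ := by ring
  -- direction 2
  have hsup0 : 0 ≤ ⨆ θ : ℝ, ‖F θ‖ := le_trans (norm_nonneg (F 0)) (le_ciSup hbddF 0)
  have dir2 : 2 * numRadius T ≤ ⨆ θ : ℝ, ‖F θ‖ := by
    have h : numRadius T ≤ (⨆ θ : ℝ, ‖F θ‖) / 2 := by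
      refine Real.iSup_le (fun z => ?_) (by linarith)
      have hzn : ‖(z : WithLp 2 (H × H))‖ ^ 2 = 1 := by rw [z.2]; norm_num
      rw [WithLp.prod_norm_sq_eq_of_L2] at hzn
      obtain ⟨φ, hφ⟩ := stmt8_align (inner ℂ (A (z : WithLp 2 (H × H)).snd)
        (z : WithLp 2 (H × H)).fst : ℂ) (inner ℂ (B (z : WithLp 2 (H × H)).snd)
        (z : WithLp 2 (H × H)).fst : ℂ)
      have hstep : ‖(inner ℂ (T z.val) z.val : ℂ)‖
          ≤ ‖(inner ℂ ((F (-φ)) (z : WithLp 2 (H × H)).snd)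
            (z : WithLp 2 (H × H)).fst : ℂ)‖ := by
        rw [hTz, hFinner]
        have hcast : (↑(-φ) : ℂ) = -(φ : ℂ) := by push_cast; ring
        rw [hcast, neg_mul, neg_neg]
        calc ‖((inner ℂ (A (z : WithLp 2 (H × H)).snd)
              (z : WithLp 2 (H × H)).fst : ℂ)
              + conj (inner ℂ (B (z : WithLp 2 (H × H)).snd) (z : WithLp 2 (H × H)).fst : ℂ))‖
            ≤ ‖(inner ℂ (A (z : WithLp 2 (H × H)).snd)
                (z : WithLp 2 (H × H)).fst : ℂ)‖
              + ‖(inner ℂ (B (z : WithLp 2 (H × H)).snd)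
                (z : WithLp 2 (H × H)).fst : ℂ)‖ := by
              calc _ ≤ _ := norm_add_le _ _
                _ = _ := by rw [Complex.norm_conj]
          _ = _ := hφ.symm
      have hbound : ‖(inner ℂ ((F (-φ)) (z : WithLp 2 (H × H)).snd)
          (z : WithLp 2 (H × H)).fst : ℂ)‖ ≤ ‖F (-φ)‖ / 2 := by
        calc ‖(inner ℂ ((F (-φ)) (z : WithLp 2 (H × H)).snd)
            (z : WithLp 2 (H × H)).fst : ℂ)‖
            = ‖(inner ℂ ((F (-φ)) (z : WithLp 2 (H × H)).snd)
              (z : WithLp 2 (H × H)).fst : ℂ)‖ := rfl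
          _ ≤ ‖(F (-φ)) (z : WithLp 2 (H × H)).snd‖ * ‖(z : WithLp 2 (H × H)).fst‖ :=
              norm_inner_le_norm _ _
          _ ≤ (‖F (-φ)‖ * ‖(z : WithLp 2 (H × H)).snd‖) * ‖(z : WithLp 2 (H × H)).fst‖ := by
              gcongr; exact (F (-φ)).le_opNorm _
          _ ≤ ‖F (-φ)‖ / 2 := by
              have h1 : (0:ℝ) ≤ ‖F (-φ)‖ := norm_nonneg _
              nlinarith [norm_nonneg (z : WithLp 2 (H × H)).fst,
                norm_nonneg (z : WithLp 2 (H × H)).snd,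
                mul_nonneg h1 (sq_nonneg (‖(z : WithLp 2 (H × H)).fst‖
                  - ‖(z : WithLp 2 (H × H)).snd‖))]
      have hle : ‖F (-φ)‖ ≤ ⨆ θ : ℝ, ‖F θ‖ := le_ciSup hbddF (-φ)
      calc ‖(inner ℂ (T z.val) z.val : ℂ)‖ ≤ ‖F (-φ)‖ / 2 := le_trans hstep hbound
        _ ≤ (⨆ θ : ℝ, ‖F θ‖) / 2 := by linarith
    linarith
  exact le_antisymm dir2 (Real.iSup_le dir1 (by linarith))
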